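/- Let P be a finite partial order and let A, B be maximal antichains of P. If M is a greatest lower bound of {A, B} and J is a least upper bound of {A, B} in (MA(P), ⊑), then A ∪ B ⊆ M ∪ J. -/

import Mathlib

/-- A maximal antichain of a partial order: an antichain (w.r.t. `≤`) not properly
contained in any other antichain. -/
def MaxAntichain {α : Type*} [PartialOrder α] (A : Set α) : Prop :=
  IsAntichain (· ≤ ·) A ∧ ∀ B : Set α, IsAntichain (· ≤ ·) B → A ⊆ B → A = B

/-- The order `A ⊑ B` on maximal antichains: every element of `A` is below
some element of `B`. -/
def MARel {α : Type*} [PartialOrder α] (A B : Set α) : Prop :=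
  ∀ a ∈ A, ∃ b ∈ B, a ≤ b

/-- Any antichain extends to a maximal antichain. -/
lemma exists_maxAntichain_superset {α : Type*} [Fintype α] [PartialOrder α]
    (S : Set α) (hS : IsAntichain (· ≤ ·) S) :
    ∃ C : Set α, MaxAntichain C ∧ S ⊆ C := by
  obtain ⟨C, hSC, hC⟩ :=
    Finite.exists_le_maximal (p := fun T : Set α => IsAntichain (· ≤ ·) T ∧ S ⊆ T)
      ⟨hS, subset_rfl⟩
  refine ⟨C, ⟨hC.1.1, fun D hD hCD => ?_⟩, hC.1.2⟩
  exact le_antisymm hCD (hC.2 ⟨hD, hC.1.2.trans hCD⟩ hCD)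

/-- If `A` is a maximal antichain, every element is comparable to some element of `A`. -/
lemma maxAntichain_comparable {α : Type*} [PartialOrder α] {A : Set α}
    (hA : MaxAntichain A) (x : α) : ∃ a ∈ A, x ≤ a ∨ a ≤ x := by
  by_contra h
  push_neg at h
  have hx : x ∉ A := fun hx => (h x hx).1 le_rfl
  have hins : IsAntichain (· ≤ ·) (insert x A) := by
    intro u hu v hv huv
    rcases hu with rfl | hu
    · rcases hv with rfl | hv
      · exact absurd rfl huv
      · exact fun hle => (h v hv).1 hle
    · rcases hv with rfl | hv
      · exact fun hle => (h u hu).2 hle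
      · exact hA.1 hu hv huv
  have := hA.2 _ hins (Set.subset_insert x A)
  exact hx (this ▸ Set.mem_insert x A)

lemma key {α : Type*} [Fintype α] [PartialOrder α] (A B M J : Set α)
    (hA : MaxAntichain A) (hB : MaxAntichain B)
    (hM : MaxAntichain M) (hJ : MaxAntichain J)
    (hMA : MARel M A) (hMB : MARel M B)
    (hMglb : ∀ C : Set α, MaxAntichain C → MARel C A → MARel C B → MARel C M)
    (hAJ : MARel A J) (hBJ : MARel B J)
    (hJlub : ∀ C : Set α, MaxAntichain C → MARel A C → MARel B C → MARel J C) :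
    A ⊆ M ∪ J := by
  intro x hxA
  by_cases hmax : ∀ y ∈ A ∪ B, ¬ x < y
  · -- x is maximal in A ∪ B, show x ∈ J
    right
    set S : Set α := {y | y ∈ A ∪ B ∧ ∀ z ∈ A ∪ B, ¬ y < z} with hSdef
    have hxS : x ∈ S := ⟨Or.inl hxA, hmax⟩
    have hSanti : IsAntichain (· ≤ ·) S := by
      intro u hu v hv huv hle
      exact hu.2 v hv.1 (lt_of_le_of_ne hle huv)
    obtain ⟨C, hC, hSC⟩ := exists_maxAntichain_superset S hSanti
    have hup : ∀ a ∈ A ∪ B, ∃ c ∈ C, a ≤ c := by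
      intro a ha
      obtain ⟨b, hab, hb⟩ := Finite.exists_le_maximal (p := (· ∈ A ∪ B)) ha
      refine ⟨b, hSC ⟨hb.1, fun z hz hlt => ?_⟩, hab⟩
      exact absurd (hb.2 hz hlt.le) (not_le_of_gt hlt)
    have hJC := hJlub C hC (fun a ha => hup a (Or.inl ha)) (fun b hb => hup b (Or.inr hb))
    obtain ⟨j, hjJ, hxj⟩ := hAJ x hxA
    obtain ⟨c, hcC, hjc⟩ := hJC j hjJ
    have hxc : x ≤ c := hxj.trans hjc
    have hxceq : x = c := by
      by_contra hne
      exact hC.1 (hSC hxS) hcC hne hxc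
    have : x = j := le_antisymm hxj (hxceq ▸ hjc)
    exact this ▸ hjJ
  · -- x is not maximal, hence minimal in A ∪ B; show x ∈ M
    left
    push_neg at hmax
    obtain ⟨y, hy, hxy⟩ := hmax
    have hyB : y ∈ B := by
      rcases hy with hyA | hyB
      · exact absurd hxy.le (hA.1 hxA hyA hxy.ne)
      · exact hyB
    have hxmin : ∀ z ∈ A ∪ B, ¬ z < x := by
      rintro z (hzA | hzB) hzx
      · exact hA.1 hzA hxA hzx.ne hzx.le
      · exact hB.1 hzB hyB (hzx.trans hxy).ne (hzx.trans hxy).le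
    set S : Set α := {y | y ∈ A ∪ B ∧ ∀ z ∈ A ∪ B, ¬ z < y} with hSdef
    have hxS : x ∈ S := ⟨Or.inl hxA, hxmin⟩
    have hSanti : IsAntichain (· ≤ ·) S := by
      intro u hu v hv huv hle
      exact hv.2 u hu.1 (lt_of_le_of_ne hle huv)
    obtain ⟨C, hC, hSC⟩ := exists_maxAntichain_superset S hSanti
    -- C is a lower bound of A and B
    have hlow : ∀ (D : Set α), MaxAntichain D → D ⊆ A ∪ B → MARel C D := by
      intro D hD hDAB c hcC
      obtain ⟨a, haD, hcomp⟩ := maxAntichain_comparable hD c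
      rcases hcomp with h | h
      · exact ⟨a, haD, h⟩
      · -- a ≤ c; show a = c
        rcases eq_or_lt_of_le h with rfl | hlt
        · exact ⟨a, haD, le_rfl⟩
        · exfalso
          obtain ⟨w, hwa, hw⟩ := Finite.exists_le_minimal (p := (· ∈ A ∪ B)) (hDAB haD)
          have hwS : w ∈ S := ⟨hw.1, fun z hz hzw => absurd (hw.2 hz hzw.le) (not_le_of_gt hzw)⟩
          have hwc : w < c := lt_of_le_of_lt hwa hlt
          exact hC.1 (hSC hwS) hcC hwc.ne hwc.le
    have hCM := hMglb C hC (hlow A hA Set.subset_union_left)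
      (hlow B hB Set.subset_union_right)
    obtain ⟨m, hmM, hxm⟩ := hCM x (hSC hxS)
    obtain ⟨a, haA, hma⟩ := hMA m hmM
    have hxa : x ≤ a := hxm.trans hma
    have hxaeq : x = a := by
      by_contra hne
      exact hA.1 hxA haA hne hxa
    have : x = m := le_antisymm hxm (hxaeq ▸ hma)
    exact this ▸ hmM

theorem stmt7 {α : Type*} [Fintype α] [PartialOrder α] (A B M J : Set α)
    (hA : MaxAntichain A) (hB : MaxAntichain B)
    (hM : MaxAntichain M) (hJ : MaxAntichain J)
    (hMA : MARel M A) (hMB : MARel M B)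
    (hMglb : ∀ C : Set α, MaxAntichain C → MARel C A → MARel C B → MARel C M)
    (hAJ : MARel A J) (hBJ : MARel B J)
    (hJlub : ∀ C : Set α, MaxAntichain C → MARel A C → MARel B C → MARel J C) :
    A ∪ B ⊆ M ∪ J := by
  rintro x (hx | hx)
  · exact key A B M J hA hB hM hJ hMA hMB hMglb hAJ hBJ hJlub hx
  · exact key B A M J hB hA hM hJ hMB hMA (fun C hC h1 h2 => hMglb C hC h2 h1)
      hBJ hAJ (fun C hC h1 h2 => hJlub C hC h2 h1) hx
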